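/- arXiv:1305.2232 — 2 statements merged into one kernel-verified Lean document; each statement's English description precedes it below -/
import Mathlib

section
/- Let (Ω, μ) be a measure space, n a positive natural number, φ_1, …, φ_n and μ_1, …, μ_n functions in L²(Ω) satisfying ∫_Ω μ_i φ_j dμ = c_j δ_{ij} for all i, j, and let h_1, …, h_n be positive reals and C, C₂, C₃ positive constants such that: c_i ≥ C·h_i² for all i; ‖Σ_k a_k φ_k‖²_{L²(Ω)} ≤ C₂·Σ_k a_k² h_k² for all real coefficients a; and ‖Σ_k a_k μ_k‖²_{L²(Ω)} ≤ C₃·Σ_k a_k² h_k² for all real coefficients a. Then the inf-sup condition holds with β = √(C₂·C₃)/C: for every nonzero coefficient vector (a_1, …, a_n), writing φ_h = Σ_k a_k φ_k and μ_h = Σ_k a_k μ_k, one has μ_h ≠ 0 in L²(Ω) and ‖φ_h‖_{L²(Ω)} ≤ β · (∫_Ω μ_h φ_h dμ) / ‖μ_h‖_{L²(Ω)}. -/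
open MeasureTheory

lemma memL2_mul_integrable {Ω : Type*} [MeasurableSpace Ω] {ν : Measure Ω}
    {f g : Ω → ℝ} (hf : MemLp f 2 ν) (hg : MemLp g 2 ν) :
    Integrable (fun x => f x * g x) ν := by
  refine (hf.integrable_sq.add hg.integrable_sq).mono' (hf.1.mul hg.1) ?_
  filter_upwards with x
  simp only [Pi.add_apply, Real.norm_eq_abs, abs_mul]
  nlinarith [abs_nonneg (f x), abs_nonneg (g x), sq_abs (f x), sq_abs (g x),
    sq_nonneg (|f x| - |g x|)]

/-- Under biorthogonality `∫ μᵢ φⱼ = cⱼ δᵢⱼ`, with `cᵢ ≥ C hᵢ²` and two-sided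
`L²`-norm equivalences `‖Σ aₖ φₖ‖² ≤ C₂ Σ aₖ² hₖ²`, `‖Σ aₖ μₖ‖² ≤ C₃ Σ aₖ² hₖ²`,
the inf-sup condition holds with `β = √(C₂ C₃)/C`: for every nonzero coefficient
vector `a`, with `φ_h = Σ aₖ φₖ` and `μ_h = Σ aₖ μₖ`, one has `μ_h ≠ 0` in `L²`
and `‖φ_h‖ ≤ β (∫ μ_h φ_h) / ‖μ_h‖`. -/
theorem infsup_from_biorthogonality
    {Ω : Type*} [MeasurableSpace Ω] (ν : Measure Ω)
    (n : ℕ) (hn : 0 < n)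
    (φ μ : Fin n → Ω → ℝ) (c : Fin n → ℝ) (h : Fin n → ℝ)
    (C C₂ C₃ : ℝ) (hC : 0 < C) (hC₂ : 0 < C₂) (hC₃ : 0 < C₃)
    (hh : ∀ i, 0 < h i)
    (hφ : ∀ i, MemLp (φ i) 2 ν) (hμ : ∀ i, MemLp (μ i) 2 ν)
    (hbi : ∀ i j : Fin n,
      ∫ x, μ i x * φ j x ∂ν = if i = j then c j else 0)
    (hc : ∀ i, C * h i ^ 2 ≤ c i)
    (hφnorm : ∀ a : Fin n → ℝ,
      ((eLpNorm (fun x => ∑ k, a k * φ k x) 2 ν).toReal) ^ 2 ≤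
        C₂ * ∑ k, (a k) ^ 2 * (h k) ^ 2)
    (hμnorm : ∀ a : Fin n → ℝ,
      ((eLpNorm (fun x => ∑ k, a k * μ k x) 2 ν).toReal) ^ 2 ≤
        C₃ * ∑ k, (a k) ^ 2 * (h k) ^ 2) :
    ∀ a : Fin n → ℝ, a ≠ 0 →
      eLpNorm (fun x => ∑ k, a k * μ k x) 2 ν ≠ 0 ∧
      (eLpNorm (fun x => ∑ k, a k * φ k x) 2 ν).toReal ≤
        (Real.sqrt (C₂ * C₃) / C) *
          (∫ x, (∑ k, a k * μ k x) * (∑ k, a k * φ k x) ∂ν) /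
            (eLpNorm (fun x => ∑ k, a k * μ k x) 2 ν).toReal := by
  intro a ha
  set S : ℝ := ∑ k, (a k) ^ 2 * (h k) ^ 2 with hSdef
  -- S > 0
  obtain ⟨i₀, hi₀⟩ : ∃ i, a i ≠ 0 := by
    by_contra hcon
    push_neg at hcon
    exact ha (funext hcon)
  have hS : 0 < S := by
    have h1 : 0 < (a i₀) ^ 2 * (h i₀) ^ 2 := by
      have h0 : 0 < (a i₀) ^ 2 := by
        rcases lt_or_gt_of_ne hi₀ with hlt | hgt
        · nlinarith
        · nlinarith
      exact mul_pos h0 (pow_pos (hh i₀) 2)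
    refine lt_of_lt_of_le h1 ?_
    exact Finset.single_le_sum (f := fun k => (a k) ^ 2 * (h k) ^ 2)
      (fun k _ => by positivity) (Finset.mem_univ i₀)
  -- Memℒp of sums
  have hμh : MemLp (fun x => ∑ k, a k * μ k x) 2 ν :=
    memLp_finset_sum _ (fun i _ => (hμ i).const_mul (a i))
  have hφh : MemLp (fun x => ∑ k, a k * φ k x) 2 ν :=
    memLp_finset_sum _ (fun i _ => (hφ i).const_mul (a i))
  -- integral computation
  have hI : ∫ x, (∑ k, a k * μ k x) * (∑ k, a k * φ k x) ∂ν = ∑ i, (a i) ^ 2 * c i := by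
    have hexp : ∀ x, (∑ k, a k * μ k x) * (∑ k, a k * φ k x)
        = ∑ i, ∑ j, (a i * a j) * (μ i x * φ j x) := by
      intro x
      rw [Finset.sum_mul_sum]
      refine Finset.sum_congr rfl fun i _ => Finset.sum_congr rfl fun j _ => by ring
    simp_rw [hexp]
    rw [integral_finset_sum _ fun i _ => integrable_finset_sum _ fun j _ =>
      (memL2_mul_integrable (hμ i) (hφ j)).const_mul _]
    refine Finset.sum_congr rfl fun i _ => ?_
    rw [integral_finset_sum _ fun j _ => (memL2_mul_integrable (hμ i) (hφ j)).const_mul _]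
    have : ∀ j, ∫ x, (a i * a j) * (μ i x * φ j x) ∂ν
        = (a i * a j) * (if i = j then c j else 0) := by
      intro j
      rw [integral_const_mul, hbi]
    simp_rw [this, mul_ite, mul_zero]
    rw [Finset.sum_ite_eq Finset.univ i (fun j => a i * a j * c j)]
    simp [sq]
  have hCS : C * S ≤ ∫ x, (∑ k, a k * μ k x) * (∑ k, a k * φ k x) ∂ν := by
    rw [hI, hSdef, Finset.mul_sum]
    refine Finset.sum_le_sum fun i _ => ?_
    have := hc i
    nlinarith [sq_nonneg (a i)]
  have hIpos : 0 < ∫ x, (∑ k, a k * μ k x) * (∑ k, a k * φ k x) ∂ν :=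
    lt_of_lt_of_le (by positivity) hCS
  -- eLpNorm μ_h ≠ 0
  have hμne : eLpNorm (fun x => ∑ k, a k * μ k x) 2 ν ≠ 0 := by
    intro h0
    have hzero : (fun x => ∑ k, a k * μ k x) =ᵐ[ν] 0 :=
      (eLpNorm_eq_zero_iff hμh.1 two_ne_zero).mp h0
    have : ∫ x, (∑ k, a k * μ k x) * (∑ k, a k * φ k x) ∂ν = 0 := by
      refine integral_eq_zero_of_ae ?_
      filter_upwards [hzero] with x hx
      simp [hx]
    exact absurd this (ne_of_gt hIpos)
  refine ⟨hμne, ?_⟩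
  set nφ := (eLpNorm (fun x => ∑ k, a k * φ k x) 2 ν).toReal with hnφ
  set nμ := (eLpNorm (fun x => ∑ k, a k * μ k x) 2 ν).toReal with hnμ
  have hnμpos : 0 < nμ := ENNReal.toReal_pos hμne hμh.eLpNorm_ne_top
  have hnφ0 : 0 ≤ nφ := ENNReal.toReal_nonneg
  rw [le_div_iff₀ hnμpos]
  have hφb : nφ ≤ Real.sqrt (C₂ * S) := by
    have := hφnorm a
    rw [← hSdef] at this
    nlinarith [Real.sq_sqrt (show (0:ℝ) ≤ C₂ * S by positivity),
      Real.sqrt_nonneg (C₂ * S)]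
  have hμb : nμ ≤ Real.sqrt (C₃ * S) := by
    have := hμnorm a
    rw [← hSdef] at this
    nlinarith [Real.sq_sqrt (show (0:ℝ) ≤ C₃ * S by positivity),
      Real.sqrt_nonneg (C₃ * S)]
  have hsq : Real.sqrt (C₂ * S) * Real.sqrt (C₃ * S) = Real.sqrt (C₂ * C₃) * S := by
    rw [← Real.sqrt_mul (by positivity), show C₂ * S * (C₃ * S) = (C₂ * C₃) * S ^ 2 by ring,
      Real.sqrt_mul (by positivity), Real.sqrt_sq hS.le]
  have h1 : nφ * nμ ≤ Real.sqrt (C₂ * C₃) * S := by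
    rw [← hsq]
    exact mul_le_mul hφb hμb hnμpos.le (Real.sqrt_nonneg _)
  have h2 : Real.sqrt (C₂ * C₃) * S * C ≤ Real.sqrt (C₂ * C₃) *
      (∫ x, (∑ k, a k * μ k x) * (∑ k, a k * φ k x) ∂ν) := by
    have := mul_le_mul_of_nonneg_left hCS (Real.sqrt_nonneg (C₂ * C₃))
    nlinarith [Real.sqrt_nonneg (C₂ * C₃)]
  calc nφ * nμ ≤ Real.sqrt (C₂ * C₃) * S := h1
    _ = Real.sqrt (C₂ * C₃) * S * C / C := by field_simp
    _ ≤ Real.sqrt (C₂ * C₃) * (∫ x, (∑ k, a k * μ k x) * (∑ k, a k * φ k x) ∂ν) / C :=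
        by gcongr
    _ = Real.sqrt (C₂ * C₃) / C * (∫ x, (∑ k, a k * μ k x) * (∑ k, a k * φ k x) ∂ν) := by ring
end

section
/- Let H be a real inner product space, and let S and M be finite-dimensional subspaces of H with dim S = dim M = n. Suppose there is a constant β > 0 such that for every s ∈ S, ‖s‖ ≤ β · sup_{μ ∈ M, μ ≠ 0} ⟨s, μ⟩ / ‖μ‖. Then for every v ∈ H there exists a unique element Q v ∈ S such that ⟨v − Q v, μ⟩ = 0 for all μ ∈ M; moreover the map v ↦ Q v is linear, satisfies Q s = s for all s ∈ S (so Q is a projection onto S), and is stable: ‖Q v‖ ≤ β · ‖v‖ for all v ∈ H. -/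
open RealInnerProductSpace

section Aux

variable {H : Type*} [NormedAddCommGroup H] [InnerProductSpace ℝ H]

/-- The bilinear pairing `H →ₗ M →ₗ ℝ` given by the inner product. -/
noncomputable def pairAux (M : Submodule ℝ H) : H →ₗ[ℝ] (M →ₗ[ℝ] ℝ) :=
  LinearMap.mk₂ ℝ (fun v (μ : M) => ⟪v, (μ : H)⟫)
    (fun x y μ => inner_add_left _ _ _)
    (fun c x μ => real_inner_smul_left _ _ _)
    (fun x μ ν => by simp [inner_add_right])
    (fun c x μ => by simp [real_inner_smul_right])

theorem norm_le_of_pair (S M : Submodule ℝ H) (β : ℝ) (hβ : 0 < β)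
    (hinfsup : ∀ s ∈ S,
      ‖s‖ ≤ β * ⨆ μ : {μ : H // μ ∈ M ∧ μ ≠ 0}, ⟪s, (μ : H)⟫ / ‖(μ : H)‖)
    (s : H) (hs : s ∈ S) (c : ℝ) (hc : 0 ≤ c)
    (hpair : ∀ μ ∈ M, ⟪s, μ⟫ ≤ c * ‖μ‖) : ‖s‖ ≤ β * c := by
  refine (hinfsup s hs).trans ?_
  have : (⨆ μ : {μ : H // μ ∈ M ∧ μ ≠ 0}, ⟪s, (μ : H)⟫ / ‖(μ : H)‖) ≤ c := by
    refine Real.iSup_le (fun μ => ?_) hc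
    rw [div_le_iff₀ (norm_pos_iff.mpr μ.2.2)]
    exact hpair μ μ.2.1
  nlinarith

end Aux

/-- Stability of the projector defined by the multiplier space: if `S` and `M`
are `n`-dimensional subspaces of a real inner product space `H` satisfying the
inf-sup condition `‖s‖ ≤ β ⨆_{0 ≠ μ ∈ M} ⟪s, μ⟫/‖μ‖` for all `s ∈ S`, then
there is a (unique-valued) linear projection `Q` onto `S` characterized by
`⟪v - Q v, μ⟫ = 0` for all `μ ∈ M`, and it is stable: `‖Q v‖ ≤ β ‖v‖`. -/
theorem projection_well_defined_and_stable
    {H : Type*} [NormedAddCommGroup H] [InnerProductSpace ℝ H]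
    (S M : Submodule ℝ H) (n : ℕ)
    [FiniteDimensional ℝ S] [FiniteDimensional ℝ M]
    (hS : Module.finrank ℝ S = n) (hM : Module.finrank ℝ M = n)
    (β : ℝ) (hβ : 0 < β)
    (hinfsup : ∀ s ∈ S,
      ‖s‖ ≤ β * ⨆ μ : {μ : H // μ ∈ M ∧ μ ≠ 0}, ⟪s, (μ : H)⟫ / ‖(μ : H)‖) :
    ∃ Q : H →ₗ[ℝ] H,
      (∀ v : H, Q v ∈ S) ∧
      (∀ v : H, ∀ μ ∈ M, ⟪v - Q v, μ⟫ = 0) ∧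
      (∀ v : H, ∀ w ∈ S, (∀ μ ∈ M, ⟪v - w, μ⟫ = 0) → w = Q v) ∧
      (∀ s ∈ S, Q s = s) ∧
      (∀ v : H, ‖Q v‖ ≤ β * ‖v‖) := by
  classical
  -- key: elements of S pairing to zero with all of M are zero (in norm form)
  have key : ∀ s ∈ S, (∀ μ ∈ M, ⟪s, μ⟫ = 0) → s = 0 := by
    intro s hs h
    have := norm_le_of_pair S M β hβ hinfsup s hs 0 le_rfl
      (fun μ hμ => by rw [h μ hμ]; simp)
    simpa [norm_le_zero_iff] using this
  set B := pairAux (H := H) M with hB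
  have hBapp : ∀ (v : H) (μ : M), B v μ = ⟪v, (μ : H)⟫ := fun v μ => rfl
  set T : S →ₗ[ℝ] (M →ₗ[ℝ] ℝ) := B.comp S.subtype with hT
  have hTinj : Function.Injective T := by
    rw [← LinearMap.ker_eq_bot, Submodule.eq_bot_iff]
    intro s hsk
    have hs0 : ∀ μ ∈ M, ⟪(s : H), μ⟫ = 0 := by
      intro μ hμ
      have := congrFun (congrArg DFunLike.coe hsk) ⟨μ, hμ⟩
      simpa [hT, hBapp] using this
    exact Subtype.ext (key s s.2 hs0)
  have hfr : Module.finrank ℝ S = Module.finrank ℝ (M →ₗ[ℝ] ℝ) := by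
    have hd : Module.finrank ℝ (Module.Dual ℝ M) = Module.finrank ℝ M :=
      Subspace.dual_finrank_eq
    rw [hS, show Module.finrank ℝ (M →ₗ[ℝ] ℝ) = Module.finrank ℝ (Module.Dual ℝ M) from rfl,
      hd, hM]
  have hTsurj : Function.Surjective T :=
    (LinearMap.injective_iff_surjective_of_finrank_eq_finrank hfr).mp hTinj
  let e : S ≃ₗ[ℝ] (M →ₗ[ℝ] ℝ) := LinearEquiv.ofBijective T ⟨hTinj, hTsurj⟩
  let Q : H →ₗ[ℝ] H := S.subtype.comp (e.symm.toLinearMap.comp B)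
  have hQmem : ∀ v : H, Q v ∈ S := fun v => (e.symm (B v)).2
  have hQpair : ∀ (v : H) (μ : M), ⟪Q v, (μ : H)⟫ = ⟪v, (μ : H)⟫ := by
    intro v μ
    have : T (e.symm (B v)) = B v := e.apply_symm_apply (B v)
    have := congrFun (congrArg DFunLike.coe this) μ
    simp [hT, hBapp] at this
    exact this
  have horth : ∀ v : H, ∀ μ ∈ M, ⟪v - Q v, μ⟫ = 0 := by
    intro v μ hμ
    rw [inner_sub_left, hQpair v ⟨μ, hμ⟩]
    ring
  refine ⟨Q, hQmem, horth, ?_, ?_, ?_⟩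
  · -- uniqueness
    intro v w hw hworth
    have hmem : Q v - w ∈ S := S.sub_mem (hQmem v) hw
    have hz : ∀ μ ∈ M, ⟪Q v - w, μ⟫ = 0 := by
      intro μ hμ
      have h1 := horth v μ hμ
      have h2 := hworth μ hμ
      rw [inner_sub_left] at h1 h2 ⊢
      linarith
    have := key _ hmem hz
    rw [sub_eq_zero] at this
    exact this.symm
  · -- projection
    intro s hs
    have hmem : s - Q s ∈ S := S.sub_mem hs (hQmem s)
    have := key _ hmem (horth s)
    rwa [sub_eq_zero, eq_comm] at this
  · -- stability
    intro v
    refine norm_le_of_pair S M β hβ hinfsup (Q v) (hQmem v) ‖v‖ (norm_nonneg _) ?_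
    intro μ hμ
    rw [hQpair v ⟨μ, hμ⟩]
    exact (real_inner_le_norm v μ)
end
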